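/- For r ∈ [−1,1] and t ∈ [0,1], define H_{r,t} : (0,∞) → (0,∞) by H_{r,t}(x) = ((1 − t + t x^r)/(t + (1 − t) x^r))^{1/r} when r ≠ 0, and H_{0,t}(x) = x^{2t−1}. Then for each fixed r ∈ [−1,1]: if t ∈ [0, 1/2] the function x ↦ H_{r,t}(x) is monotone decreasing on (0,∞), and if t ∈ [1/2, 1] it is monotone increasing on (0,∞). -/
import Mathlib

/-- `H_{r,t}(x) = ((1 − t + t x^r)/(t + (1 − t) x^r))^{1/r}` for `r ≠ 0`,
and `H_{0,t}(x) = x^(2t−1)`. -/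
noncomputable def Hrt (r t x : ℝ) : ℝ :=
  if r = 0 then x ^ (2 * t - 1)
  else ((1 - t + t * x ^ r) / (t + (1 - t) * x ^ r)) ^ (1 / r)

lemma num_pos {t a : ℝ} (ht0 : 0 ≤ t) (ht1 : t ≤ 1) (ha : 0 < a) : 0 < 1 - t + t * a := by
  rcases eq_or_lt_of_le ht1 with h | h
  · subst h; nlinarith
  · nlinarith [mul_nonneg ht0 ha.le]

lemma den_pos {t a : ℝ} (ht0 : 0 ≤ t) (ht1 : t ≤ 1) (ha : 0 < a) : 0 < t + (1 - t) * a := by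
  rcases eq_or_lt_of_le ht0 with h | h
  · subst h; nlinarith
  · nlinarith [mul_nonneg (sub_nonneg.2 ht1) ha.le]

lemma frac_mono {t a b : ℝ} (ht : 1/2 ≤ t) (ht1 : t ≤ 1) (ha : 0 < a) (hb : 0 < b)
    (hab : a ≤ b) :
    (1 - t + t * a) / (t + (1 - t) * a) ≤ (1 - t + t * b) / (t + (1 - t) * b) := by
  have ht0 : (0:ℝ) ≤ t := le_trans (by norm_num) ht
  rw [div_le_div_iff₀ (den_pos ht0 ht1 ha) (den_pos ht0 ht1 hb)]
  nlinarith [mul_nonneg (by linarith : (0:ℝ) ≤ 2*t - 1) (by linarith : (0:ℝ) ≤ b - a)]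

lemma frac_anti {t a b : ℝ} (ht0 : 0 ≤ t) (ht : t ≤ 1/2) (ha : 0 < a) (hb : 0 < b)
    (hab : a ≤ b) :
    (1 - t + t * b) / (t + (1 - t) * b) ≤ (1 - t + t * a) / (t + (1 - t) * a) := by
  have ht1 : t ≤ 1 := le_trans ht (by norm_num)
  rw [div_le_div_iff₀ (den_pos ht0 ht1 hb) (den_pos ht0 ht1 ha)]
  nlinarith [mul_nonneg (by linarith : (0:ℝ) ≤ 1 - 2*t) (by linarith : (0:ℝ) ≤ b - a)]

/-- For fixed `r ∈ [−1,1]`, the map `x ↦ H_{r,t}(x)` is decreasing on `(0,∞)` for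
`t ∈ [0,1/2]` and increasing on `(0,∞)` for `t ∈ [1/2,1]`. -/
theorem Hrt_monotonicity (r : ℝ) (hr : r ∈ Set.Icc (-1 : ℝ) 1) (t : ℝ) :
    (t ∈ Set.Icc (0 : ℝ) (1/2) → AntitoneOn (fun x => Hrt r t x) (Set.Ioi (0 : ℝ))) ∧
    (t ∈ Set.Icc (1/2 : ℝ) 1 → MonotoneOn (fun x => Hrt r t x) (Set.Ioi (0 : ℝ))) := by
  constructor
  · rintro ⟨ht0, ht⟩ x hx y hy hxy
    have ht1 : t ≤ 1 := le_trans ht (by norm_num)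
    simp only [Set.mem_Ioi] at hx hy
    simp only [Hrt]
    by_cases h0 : r = 0
    · simp only [h0, if_pos rfl]
      exact Real.rpow_le_rpow_of_nonpos hx hxy (by linarith)
    · simp only [if_neg h0]
      rcases lt_or_gt_of_ne h0 with hneg | hpos
      ·
        have hxr : (0:ℝ) < x ^ r := Real.rpow_pos_of_pos hx r
        have hyr : (0:ℝ) < y ^ r := Real.rpow_pos_of_pos hy r
        have h1 : y ^ r ≤ x ^ r := Real.rpow_le_rpow_of_nonpos hx hxy hneg.le
        have h2 := frac_anti ht0 ht hyr hxr h1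
        exact Real.rpow_le_rpow_of_nonpos
          (div_pos (num_pos ht0 ht1 hxr) (den_pos ht0 ht1 hxr)) h2
          (div_nonpos_iff.mpr (Or.inl ⟨zero_le_one, hneg.le⟩))
      · have hxr : (0:ℝ) < x ^ r := Real.rpow_pos_of_pos hx r
        have hyr : (0:ℝ) < y ^ r := Real.rpow_pos_of_pos hy r
        have h1 : x ^ r ≤ y ^ r := Real.rpow_le_rpow hx.le hxy hpos.le
        have h2 := frac_anti ht0 ht hxr hyr h1
        exact Real.rpow_le_rpow
          (div_pos (num_pos ht0 ht1 hyr) (den_pos ht0 ht1 hyr)).le h2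
          (by positivity)
  · rintro ⟨ht, ht1⟩ x hx y hy hxy
    have ht0 : (0:ℝ) ≤ t := le_trans (by norm_num) ht
    simp only [Set.mem_Ioi] at hx hy
    simp only [Hrt]
    by_cases h0 : r = 0
    · simp only [h0, if_pos rfl]
      exact Real.rpow_le_rpow hx.le hxy (by linarith)
    · simp only [if_neg h0]
      rcases lt_or_gt_of_ne h0 with hneg | hpos
      · have hxr : (0:ℝ) < x ^ r := Real.rpow_pos_of_pos hx r
        have hyr : (0:ℝ) < y ^ r := Real.rpow_pos_of_pos hy r
        have h1 : y ^ r ≤ x ^ r := Real.rpow_le_rpow_of_nonpos hx hxy hneg.le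
        have h2 := frac_mono ht ht1 hyr hxr h1
        exact Real.rpow_le_rpow_of_nonpos
          (div_pos (num_pos ht0 ht1 hyr) (den_pos ht0 ht1 hyr)) h2
          (div_nonpos_iff.mpr (Or.inl ⟨zero_le_one, hneg.le⟩))
      · have hxr : (0:ℝ) < x ^ r := Real.rpow_pos_of_pos hx r
        have hyr : (0:ℝ) < y ^ r := Real.rpow_pos_of_pos hy r
        have h1 : x ^ r ≤ y ^ r := Real.rpow_le_rpow hx.le hxy hpos.le
        have h2 := frac_mono ht ht1 hxr hyr h1
        exact Real.rpow_le_rpow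
          (div_pos (num_pos ht0 ht1 hxr) (den_pos ht0 ht1 hxr)).le h2
          (by positivity)
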